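/- Consider an orthodiagonal embedding: Γ and its dual Γ* embedded in ℂ so that each face is a quadrilateral (b₋, b₋*, b₊, b₊*) whose diagonals (b₋b₊) (an edge of Γ) and (b₋*b₊*) (the dual edge) are orthogonal segments. Let T be the midpoint map sending the quad to the quadrilateral with vertices at the midpoints of its sides, and define dO on the quad's medial edges by η_w² dT on white faces, with η_w = ±i·e^{-i·arg(b₊-b₋)} on the quad and η = ±1 on faces of Γ, η = ±i on faces of Γ*. For a function F^• defined on Γ ∪ Γ* with values F^•|_Γ ∈ ℝ and F^•|_{Γ*} ∈ iℝ, the contour integral of F^• dT around the medial quadrilateral of a quad u^∘ equals -η_{u^∘}²·(b₊-b₋)(b₊*-b₋*)·[∂̄ F^•](u^∘), where [∂̄F](u^∘) := (1/2)·( (F(b₊)-F(b₋))/(conj(b₊)-conj(b₋)) + (F(b₊*)-F(b₋*))/(conj(b₊*)-conj(b₋*)) ). Consequently, F^• is t-white-holomorphic iff [∂̄ F^•](u^∘) = 0 at every quad. -/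

import Mathlib

open Complex ComplexConjugate

theorem stmt17 (bm bp bsm bsp : ℂ) (hne : bp ≠ bm)
    (horth : ∃ t : ℝ, t ≠ 0 ∧ bsp - bsm = Complex.I * (t : ℂ) * (bp - bm))
    (η : ℂ) (hη : η ^ 2 = -(conj (bp - bm) / (bp - bm)))
    (Fm Fp Gm Gp : ℝ) :
    ((Fm : ℂ) * ((bsm - bsp) / 2) + (Complex.I * (Gm : ℂ)) * ((bp - bm) / 2)
        + (Fp : ℂ) * ((bsp - bsm) / 2) + (Complex.I * (Gp : ℂ)) * ((bm - bp) / 2))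
      = -η ^ 2 * (bp - bm) * (bsp - bsm) *
        ((1 / 2 : ℂ) * (((Fp : ℂ) - (Fm : ℂ)) / (conj bp - conj bm)
          + (Complex.I * (Gp : ℂ) - Complex.I * (Gm : ℂ)) / (conj bsp - conj bsm))) ∧
    (((Fm : ℂ) * ((bsm - bsp) / 2) + (Complex.I * (Gm : ℂ)) * ((bp - bm) / 2)
        + (Fp : ℂ) * ((bsp - bsm) / 2) + (Complex.I * (Gp : ℂ)) * ((bm - bp) / 2)) = 0 ↔
      ((1 / 2 : ℂ) * (((Fp : ℂ) - (Fm : ℂ)) / (conj bp - conj bm)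
          + (Complex.I * (Gp : ℂ) - Complex.I * (Gm : ℂ)) / (conj bsp - conj bsm))) = 0) := by
  obtain ⟨t, ht, hts⟩ := horth
  have hd : bp - bm ≠ 0 := sub_ne_zero.mpr hne
  have hcd : conj (bp - bm) ≠ 0 := by
    simp only [ne_eq, map_eq_zero]; exact hd
  have ht' : (t : ℂ) ≠ 0 := by exact_mod_cast ht
  have h1 : bsm - bsp = -(Complex.I * (t : ℂ) * (bp - bm)) := by
    rw [← hts]; ring
  have h2 : conj bsp - conj bsm = -Complex.I * (t : ℂ) * conj (bp - bm) := by
    rw [← map_sub, hts]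
    simp [map_mul, Complex.conj_I]
  have h3 : conj bp - conj bm = conj (bp - bm) := (map_sub _ _ _).symm
  have key : ((Fm : ℂ) * ((bsm - bsp) / 2) + (Complex.I * (Gm : ℂ)) * ((bp - bm) / 2)
        + (Fp : ℂ) * ((bsp - bsm) / 2) + (Complex.I * (Gp : ℂ)) * ((bm - bp) / 2))
      = -η ^ 2 * (bp - bm) * (bsp - bsm) *
        ((1 / 2 : ℂ) * (((Fp : ℂ) - (Fm : ℂ)) / (conj bp - conj bm)
          + (Complex.I * (Gp : ℂ) - Complex.I * (Gm : ℂ)) / (conj bsp - conj bsm))) := by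
    rw [h1, h2, h3, hts, hη]
    set c := conj (bp - bm) with hcdef
    have e2 : (Complex.I * (Gp : ℂ) - Complex.I * (Gm : ℂ)) / (-Complex.I * (t : ℂ) * c)
        = -(((Gp : ℂ) - (Gm : ℂ)) / ((t : ℂ) * c)) := by
      rw [div_eq_iff (by exact mul_ne_zero (mul_ne_zero (neg_ne_zero.mpr Complex.I_ne_zero) ht') hcd)]
      field_simp
    rw [e2]
    field_simp
    ring
  refine ⟨key, ?_⟩
  rw [key]
  have hfac : -η ^ 2 * (bp - bm) * (bsp - bsm) ≠ 0 := by
    rw [hη, hts]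
    simp only [neg_neg]
    exact mul_ne_zero (mul_ne_zero (div_ne_zero hcd hd) hd)
      (mul_ne_zero (mul_ne_zero Complex.I_ne_zero ht') hd)
  constructor
  · intro h
    rcases mul_eq_zero.mp h with h' | h'
    · exact absurd h' hfac
    · exact h'
  · intro h
    rw [h, mul_zero]
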